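/- Let g, h : ℝⁿ → ℝ ∪ {∞} be proper closed (lower semicontinuous) convex functions. If ȳ is an optimal solution of the dual problem min_{y ∈ dom h*} [h*(y) − g*(y)], then every x ∈ ∂g*(ȳ) is an optimal solution of the primal DC program min_{x ∈ dom g} [g(x) − h(x)]. -/
import Mathlib

open Matrix Set

def ConvexERealFn {n : ℕ} (f : (Fin n → ℝ) → EReal) : Prop :=
  ∀ x y : Fin n → ℝ, ∀ a b : ℝ, 0 ≤ a → 0 ≤ b → a + b = 1 →
    f (a • x + b • y) ≤ (a : EReal) * f x + (b : EReal) * f y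

noncomputable def conjFn {n : ℕ} (f : (Fin n → ℝ) → EReal) (y : Fin n → ℝ) : EReal :=
  ⨆ x : Fin n → ℝ, (((y ⬝ᵥ x : ℝ) : EReal) - f x)

def subdiffFn {n : ℕ} (f : (Fin n → ℝ) → EReal) (xb : Fin n → ℝ) : Set (Fin n → ℝ) :=
  {y | f xb ≠ ⊤ ∧ ∀ x, f xb + ((y ⬝ᵥ (x - xb) : ℝ) : EReal) ≤ f x}

namespace TolandSingerAux

variable {n : ℕ}

/-- `y, c` give an affine minorant of `f`. -/
def AffMin (f : (Fin n → ℝ) → EReal) (y : Fin n → ℝ) (c : ℝ) : Prop :=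
  ∀ v, ((y ⬝ᵥ v - c : ℝ) : EReal) ≤ f v

lemma conj_ge (f : (Fin n → ℝ) → EReal) (y x : Fin n → ℝ) :
    ((y ⬝ᵥ x : ℝ) : EReal) - f x ≤ conjFn f y := le_iSup (fun x => ((y ⬝ᵥ x : ℝ) : EReal) - f x) x

lemma coe_of_ne {e : EReal} (h1 : e ≠ ⊥) (h2 : e ≠ ⊤) : e = ((e.toReal : ℝ) : EReal) :=
  (EReal.coe_toReal h2 h1).symm

lemma conj_le_of_affMin {f : (Fin n → ℝ) → EReal} {y : Fin n → ℝ} {c : ℝ}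
    (hmin : AffMin f y c) : conjFn f y ≤ (c : EReal) := by
  refine iSup_le fun v => ?_
  rcases eq_or_ne (f v) ⊤ with hv | hv
  · rw [hv, EReal.sub_top]; exact bot_le
  · have hb : f v ≠ ⊥ := by
      intro hbv
      have := hmin v
      rw [hbv, le_bot_iff] at this
      exact EReal.coe_ne_bot _ this
    have hs := coe_of_ne hb hv
    set s := (f v).toReal
    have h1 : y ⬝ᵥ v - c ≤ s := by
      have := hmin v
      rw [hs] at this
      exact_mod_cast this
    rw [hs, ← EReal.coe_sub]
    exact_mod_cast by linarith

def Epi (f : (Fin n → ℝ) → EReal) : Set ((Fin n → ℝ) × ℝ) :=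
  {p | f p.1 ≤ (p.2 : EReal)}

lemma epi_closed {f : (Fin n → ℝ) → EReal} (hf : LowerSemicontinuous f) :
    IsClosed (Epi f) := by
  rw [← isOpen_compl_iff, isOpen_iff_mem_nhds]
  rintro ⟨v, t⟩ hp
  have hlt : (t : EReal) < f v := not_le.1 hp
  obtain ⟨c, hc1, hc2⟩ := EReal.exists_between_coe_real hlt
  have h1 : {w | (c : EReal) < f w} ∈ nhds v := hf v _ hc2
  have h2 : Iio c ∈ nhds t := Iio_mem_nhds (EReal.coe_lt_coe_iff.1 hc1)
  rw [nhds_prod_eq]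
  refine Filter.mem_of_superset (Filter.prod_mem_prod h1 h2) ?_
  rintro ⟨w, s⟩ ⟨hw, hsmem⟩
  simp only [mem_compl_iff, Epi, mem_setOf_eq, not_le]
  exact lt_trans (EReal.coe_lt_coe_iff.2 hsmem) hw

lemma epi_convex {f : (Fin n → ℝ) → EReal} (hconv : ConvexERealFn f)
    (hbot : ∀ x, f x ≠ ⊥) : Convex ℝ (Epi f) := by
  rintro ⟨v, t⟩ hvt ⟨w, s⟩ hws a b ha hb hab
  simp only [Epi, mem_setOf_eq] at hvt hws ⊢
  have hvtop : f v ≠ ⊤ := fun htop => by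
    rw [htop] at hvt; exact (EReal.coe_ne_top t) (top_le_iff.1 hvt)
  have hwtop : f w ≠ ⊤ := fun htop => by
    rw [htop] at hws; exact (EReal.coe_ne_top s) (top_le_iff.1 hws)
  have hv := coe_of_ne (hbot v) hvtop
  have hw := coe_of_ne (hbot w) hwtop
  have hvt' : (f v).toReal ≤ t := by rw [hv] at hvt; exact_mod_cast hvt
  have hws' : (f w).toReal ≤ s := by rw [hw] at hws; exact_mod_cast hws
  have hsmul : (a • (v, t) + b • (w, s) : (Fin n → ℝ) × ℝ) = (a • v + b • w, a * t + b * s) := by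
    simp [Prod.ext_iff, smul_eq_mul]
  rw [hsmul]
  show f (a • v + b • w) ≤ ((a * t + b * s : ℝ) : EReal)
  refine le_trans (hconv v w a b ha hb hab) ?_
  rw [hv, hw, ← EReal.coe_mul, ← EReal.coe_mul, ← EReal.coe_add]
  exact_mod_cast add_le_add (mul_le_mul_of_nonneg_left hvt' ha)
    (mul_le_mul_of_nonneg_left hws' hb)

lemma sep {f : (Fin n → ℝ) → EReal} (hconv : ConvexERealFn f)
    (hbot : ∀ x, f x ≠ ⊥) (hproper : ∃ x, f x ≠ ⊤) (hlsc : LowerSemicontinuous f)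
    (x₀ : Fin n → ℝ) (r : ℝ) (hr : (r : EReal) < f x₀) :
    ∃ (y : Fin n → ℝ) (β u : ℝ), β ≤ 0 ∧
      (∀ v (t : ℝ), f v ≤ (t : EReal) → y ⬝ᵥ v + β * t < u) ∧
      u < y ⬝ᵥ x₀ + β * r := by
  have hx₀ : ((x₀, r) : (Fin n → ℝ) × ℝ) ∉ Epi f := by
    simp only [Epi, mem_setOf_eq, not_le]; exact hr
  obtain ⟨φ, u, hφ1, hφ2⟩ :=
    geometric_hahn_banach_closed_point (epi_convex hconv hbot) (epi_closed hlsc) hx₀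
  set y : Fin n → ℝ := fun i => φ (Pi.single i 1, 0) with hy
  set β : ℝ := φ (0, 1) with hβdef
  have hdec : ∀ (v : Fin n → ℝ) (t : ℝ), φ (v, t) = y ⬝ᵥ v + β * t := by
    intro v t
    have hsplit : ((v, t) : (Fin n → ℝ) × ℝ) = (v, 0) + t • ((0 : Fin n → ℝ), (1 : ℝ)) := by
      simp [Prod.ext_iff]
    have hv0 : ((v, (0 : ℝ)) : (Fin n → ℝ) × ℝ) = ∑ i, v i • ((Pi.single i 1 : Fin n → ℝ), (0 : ℝ)) := by
      rw [Prod.ext_iff]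
      constructor
      · rw [Prod.fst_sum]
        simp only [Prod.smul_mk, Prod.fst]
        rw [show (∑ i, v i • (Pi.single i 1 : Fin n → ℝ)) = ∑ i, Pi.single i (v i) from by
          refine Finset.sum_congr rfl fun i _ => ?_
          rw [← Pi.single_smul, smul_eq_mul, mul_one]]
        exact (Finset.univ_sum_single v).symm
      · rw [Prod.snd_sum]
        simp
    rw [hsplit, map_add, _root_.map_smul, hv0, map_sum]
    simp only [_root_.map_smul, smul_eq_mul]
    rw [dotProduct]
    ring_nf
    rw [Finset.sum_congr rfl fun i _ => mul_comm (v i) (y i)]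
    exact add_comm _ _
  have hβ : β ≤ 0 := by
    by_contra hβpos
    push_neg at hβpos
    obtain ⟨x1, hx1⟩ := hproper
    have hs1 := coe_of_ne (hbot x1) hx1
    set s1 := (f x1).toReal
    set t : ℝ := max s1 ((u - y ⬝ᵥ x1) / β) + 1 with ht
    have hmem : ((x1, t) : (Fin n → ℝ) × ℝ) ∈ Epi f := by
      show f x1 ≤ (t : EReal)
      rw [hs1]
      exact_mod_cast le_trans (le_max_left s1 ((u - y ⬝ᵥ x1) / β)) (by linarith)
    have hlt := hφ1 _ hmem
    rw [hdec] at hlt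
    have h2 : (u - y ⬝ᵥ x1) / β < t := lt_of_le_of_lt (le_max_right s1 ((u - y ⬝ᵥ x1) / β)) (by linarith)
    rw [div_lt_iff₀ hβpos] at h2
    linarith
  refine ⟨y, β, u, hβ, fun v t hvt => ?_, ?_⟩
  · have := hφ1 (v, t) hvt
    rwa [hdec] at this
  · have := hφ2
    rwa [hdec] at this

lemma affMin_of_sep {f : (Fin n → ℝ) → EReal} (hbot : ∀ x, f x ≠ ⊥)
    {y : Fin n → ℝ} {β u : ℝ} (hβ : β < 0)
    (hsep : ∀ v (t : ℝ), f v ≤ (t : EReal) → y ⬝ᵥ v + β * t < u) :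
    AffMin f ((-β)⁻¹ • y) ((-β)⁻¹ * u) := by
  intro v
  rcases eq_or_ne (f v) ⊤ with hv | hv
  · rw [hv]; exact le_top
  · have hs := coe_of_ne (hbot v) hv
    have h := hsep v (f v).toReal (le_of_eq hs)
    have hβ' : (0 : ℝ) < -β := neg_pos.2 hβ
    rw [hs, smul_dotProduct, smul_eq_mul]
    have key : (y ⬝ᵥ v - u) / (-β) ≤ (f v).toReal := (div_le_iff₀ hβ').2 (by nlinarith)
    have heq : (y ⬝ᵥ v - u) / (-β) = (-β)⁻¹ * (y ⬝ᵥ v) - (-β)⁻¹ * u := by ring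
    exact_mod_cast by linarith

lemma exists_affMin {f : (Fin n → ℝ) → EReal} (hconv : ConvexERealFn f)
    (hbot : ∀ x, f x ≠ ⊥) (hproper : ∃ x, f x ≠ ⊤) (hlsc : LowerSemicontinuous f) :
    ∃ y c, AffMin f y c := by
  obtain ⟨x1, hx1⟩ := hproper
  obtain ⟨s1, hs1⟩ : ∃ s : ℝ, f x1 = (s : EReal) := ⟨_, coe_of_ne (hbot x1) hx1⟩
  have hr : ((s1 - 1 : ℝ) : EReal) < f x1 := by
    rw [hs1]; exact EReal.coe_lt_coe_iff.2 (by linarith)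
  obtain ⟨y, β, u, hβ, hsep, hpt⟩ := sep hconv hbot ⟨x1, hx1⟩ hlsc x1 _ hr
  have hβ0 : β < 0 := by
    rcases hβ.lt_or_eq with h | h
    · exact h
    · exfalso
      have h1 := hsep x1 s1 (le_of_eq hs1)
      rw [h] at h1 hpt
      simp only [zero_mul, add_zero] at h1 hpt
      linarith
  exact ⟨_, _, affMin_of_sep hbot hβ0 hsep⟩

lemma le_biconj {f : (Fin n → ℝ) → EReal} (hconv : ConvexERealFn f)
    (hbot : ∀ x, f x ≠ ⊥) (hproper : ∃ x, f x ≠ ⊤) (hlsc : LowerSemicontinuous f)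
    (x₀ : Fin n → ℝ) : f x₀ ≤ conjFn (conjFn f) x₀ := by
  by_contra hcon
  push_neg at hcon
  obtain ⟨r, hr1, hr2⟩ := EReal.exists_between_coe_real hcon
  have key : ∃ (y' : Fin n → ℝ) (c : ℝ), AffMin f y' c ∧ r < y' ⬝ᵥ x₀ - c := by
    obtain ⟨y, β, u, hβ, hsep, hpt⟩ := sep hconv hbot hproper hlsc x₀ r hr2
    rcases hβ.lt_or_eq with hβ0 | hβ0
    · refine ⟨(-β)⁻¹ • y, (-β)⁻¹ * u, affMin_of_sep hbot hβ0 hsep, ?_⟩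
      rw [smul_dotProduct, smul_eq_mul]
      have hβ' : (0 : ℝ) < -β := neg_pos.2 hβ0
      have h3 : r < (y ⬝ᵥ x₀ - u) / (-β) := (lt_div_iff₀ hβ').2 (by nlinarith)
      have heq : (y ⬝ᵥ x₀ - u) / (-β) = (-β)⁻¹ * (y ⬝ᵥ x₀) - (-β)⁻¹ * u := by ring
      linarith
    · rw [hβ0] at hsep hpt
      simp only [zero_mul, add_zero] at hsep hpt
      obtain ⟨y₀, c₀, hmin₀⟩ := exists_affMin hconv hbot hproper hlsc
      have hd : (0 : ℝ) < y ⬝ᵥ x₀ - u := by linarith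
      set lam : ℝ := max 0 ((r + 1 + c₀ - y₀ ⬝ᵥ x₀) / (y ⬝ᵥ x₀ - u)) with hlam
      have hlam0 : 0 ≤ lam := le_max_left _ _
      refine ⟨y₀ + lam • y, c₀ + lam * u, ?_, ?_⟩
      · intro v
        rcases eq_or_ne (f v) ⊤ with hv | hv
        · rw [hv]; exact le_top
        · have hs := coe_of_ne (hbot v) hv
          have h1 : y₀ ⬝ᵥ v - c₀ ≤ (f v).toReal := by
            have := hmin₀ v; rw [hs] at this; exact_mod_cast this
          have h2 : y ⬝ᵥ v < u := hsep v (f v).toReal (le_of_eq hs)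
          have h3 : lam * (y ⬝ᵥ v - u) ≤ 0 :=
            mul_nonpos_of_nonneg_of_nonpos hlam0 (by linarith)
          have h4 : lam * (y ⬝ᵥ v) - lam * u = lam * (y ⬝ᵥ v - u) := by ring
          rw [hs, add_dotProduct, smul_dotProduct, smul_eq_mul]
          exact_mod_cast by linarith
      · rw [add_dotProduct, smul_dotProduct, smul_eq_mul]
        have h5 : (r + 1 + c₀ - y₀ ⬝ᵥ x₀) / (y ⬝ᵥ x₀ - u) ≤ lam := le_max_right _ _
        have h6 : r + 1 + c₀ - y₀ ⬝ᵥ x₀ ≤ lam * (y ⬝ᵥ x₀ - u) := (div_le_iff₀ hd).1 h5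
        have h7 : lam * (y ⬝ᵥ x₀) - lam * u = lam * (y ⬝ᵥ x₀ - u) := by ring
        linarith
  obtain ⟨y', c, hmin, hrc⟩ := key
  have h1 : ((x₀ ⬝ᵥ y' : ℝ) : EReal) - conjFn f y' ≤ conjFn (conjFn f) x₀ :=
    conj_ge (conjFn f) x₀ y'
  have h2 : ((y' ⬝ᵥ x₀ - c : ℝ) : EReal) ≤ ((x₀ ⬝ᵥ y' : ℝ) : EReal) - conjFn f y' := by
    rw [EReal.coe_sub, dotProduct_comm y' x₀]
    exact EReal.sub_le_sub le_rfl (conj_le_of_affMin hmin)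
  have h3 : (r : EReal) < conjFn (conjFn f) x₀ :=
    lt_of_lt_of_le (lt_of_lt_of_le (EReal.coe_lt_coe_iff.2 hrc) h2) h1
  exact lt_irrefl _ (h3.trans hr1)

lemma conj_ne_bot {f : (Fin n → ℝ) → EReal} (hbot : ∀ x, f x ≠ ⊥)
    (hproper : ∃ x, f x ≠ ⊤) (y : Fin n → ℝ) : conjFn f y ≠ ⊥ := by
  obtain ⟨x1, hx1⟩ := hproper
  obtain ⟨s1, hs1⟩ : ∃ s : ℝ, f x1 = (s : EReal) := ⟨_, coe_of_ne (hbot x1) hx1⟩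
  have h := conj_ge f y x1
  rw [hs1, ← EReal.coe_sub] at h
  intro hb
  rw [hb, le_bot_iff] at h
  exact EReal.coe_ne_bot _ h

end TolandSingerAux

open TolandSingerAux in
/-- Toland–Singer duality (ii): for proper closed convex `g, h`, if `ȳ` solves the dual
`min_{y ∈ dom h*} [h* − g*]`, then every `x ∈ ∂g*(ȳ)` solves the primal DC program
`min_{x ∈ dom g} [g − h]`. -/
theorem stmt7 {n : ℕ} (g h : (Fin n → ℝ) → EReal)
    (hg : ConvexERealFn g) (hh : ConvexERealFn h)
    (hgbot : ∀ x, g x ≠ ⊥) (hhbot : ∀ x, h x ≠ ⊥)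
    (hgproper : ∃ x, g x ≠ ⊤) (hhproper : ∃ x, h x ≠ ⊤)
    (hgc : LowerSemicontinuous g) (hhc : LowerSemicontinuous h)
    (yb : Fin n → ℝ)
    (hopt : conjFn h yb ≠ ⊤ ∧
      ∀ z, conjFn h z ≠ ⊤ → conjFn h yb - conjFn g yb ≤ conjFn h z - conjFn g z)
    (x : Fin n → ℝ) (hx : x ∈ subdiffFn (conjFn g) yb) :
    g x ≠ ⊤ ∧ ∀ z, g z ≠ ⊤ → g x - h x ≤ g z - h z := by
  obtain ⟨hgyb_top, hsub⟩ := hx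
  obtain ⟨A, hA⟩ : ∃ a : ℝ, conjFn g yb = (a : EReal) :=
    ⟨_, coe_of_ne (conj_ne_bot hgbot hgproper yb) hgyb_top⟩
  obtain ⟨B, hB⟩ : ∃ b : ℝ, conjFn h yb = (b : EReal) :=
    ⟨_, coe_of_ne (conj_ne_bot hhbot hhproper yb) hopt.1⟩
  have hgx_le : g x ≤ ((yb ⬝ᵥ x - A : ℝ) : EReal) := by
    refine le_trans (le_biconj hg hgbot hgproper hgc x) (iSup_le fun w => ?_)
    rcases eq_or_ne (conjFn g w) ⊤ with hw | hw
    · rw [hw, EReal.sub_top]; exact bot_le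
    · obtain ⟨c, hc⟩ : ∃ c : ℝ, conjFn g w = (c : EReal) :=
        ⟨_, coe_of_ne (conj_ne_bot hgbot hgproper w) hw⟩
      have hsub' := hsub w
      rw [hA, hc, ← EReal.coe_add] at hsub'
      have h1 : A + x ⬝ᵥ (w - yb) ≤ c := EReal.coe_le_coe_iff.1 hsub'
      rw [hc, ← EReal.coe_sub]
      refine EReal.coe_le_coe_iff.2 ?_
      have h2 : x ⬝ᵥ (w - yb) = x ⬝ᵥ w - x ⬝ᵥ yb := dotProduct_sub x w yb
      have h4 : yb ⬝ᵥ x = x ⬝ᵥ yb := dotProduct_comm yb x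
      linarith
  have hgx_top : g x ≠ ⊤ := fun ht => by
    rw [ht] at hgx_le; exact EReal.coe_ne_top _ (top_le_iff.1 hgx_le)
  obtain ⟨sg, hsg⟩ : ∃ s : ℝ, g x = (s : EReal) := ⟨_, coe_of_ne (hgbot x) hgx_top⟩
  have hgx_le' : sg ≤ yb ⬝ᵥ x - A := by
    rw [hsg] at hgx_le; exact EReal.coe_le_coe_iff.1 hgx_le
  refine ⟨hgx_top, fun z hz => ?_⟩
  obtain ⟨sz, hsz⟩ : ∃ s : ℝ, g z = (s : EReal) := ⟨_, coe_of_ne (hgbot z) hz⟩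
  have hhz_le : h z ≤ ((sz + A - B : ℝ) : EReal) := by
    refine le_trans (le_biconj hh hhbot hhproper hhc z) (iSup_le fun y' => ?_)
    rcases eq_or_ne (conjFn h y') ⊤ with hy' | hy'
    · rw [hy', EReal.sub_top]; exact bot_le
    · obtain ⟨c, hc⟩ : ∃ c : ℝ, conjFn h y' = (c : EReal) :=
        ⟨_, coe_of_ne (conj_ne_bot hhbot hhproper y') hy'⟩
      have hdual := hopt.2 y' hy'
      rw [hA, hB, hc, ← EReal.coe_sub] at hdual
      have hgy'_top : conjFn g y' ≠ ⊤ := by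
        intro ht; rw [ht, EReal.sub_top, le_bot_iff] at hdual
        exact EReal.coe_ne_bot _ hdual
      obtain ⟨a, ha⟩ : ∃ a : ℝ, conjFn g y' = (a : EReal) :=
        ⟨_, coe_of_ne (conj_ne_bot hgbot hgproper y') hgy'_top⟩
      rw [ha, ← EReal.coe_sub] at hdual
      have hdual' : B - A ≤ c - a := EReal.coe_le_coe_iff.1 hdual
      have hFY : y' ⬝ᵥ z - sz ≤ a := by
        have hfy := conj_ge g y' z
        rw [hsz, ← EReal.coe_sub, ha] at hfy
        exact EReal.coe_le_coe_iff.1 hfy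
      rw [hc, ← EReal.coe_sub]
      refine EReal.coe_le_coe_iff.2 ?_
      have h5 : z ⬝ᵥ y' = y' ⬝ᵥ z := dotProduct_comm z y'
      linarith
  have hhz_top : h z ≠ ⊤ := fun ht => by
    rw [ht] at hhz_le; exact EReal.coe_ne_top _ (top_le_iff.1 hhz_le)
  obtain ⟨shz, hshz⟩ : ∃ s : ℝ, h z = (s : EReal) := ⟨_, coe_of_ne (hhbot z) hhz_top⟩
  have hshz' : shz ≤ sz + A - B := by
    rw [hshz] at hhz_le; exact EReal.coe_le_coe_iff.1 hhz_le
  rcases eq_or_ne (h x) ⊤ with hhx | hhx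
  · rw [hsg, hhx, EReal.sub_top]; exact bot_le
  · obtain ⟨shx, hshx⟩ : ∃ s : ℝ, h x = (s : EReal) := ⟨_, coe_of_ne (hhbot x) hhx⟩
    have hFYx : yb ⬝ᵥ x - shx ≤ B := by
      have hfy := conj_ge h yb x
      rw [hshx, ← EReal.coe_sub, hB] at hfy
      exact EReal.coe_le_coe_iff.1 hfy
    rw [hsg, hshx, hsz, hshz, ← EReal.coe_sub, ← EReal.coe_sub]
    exact EReal.coe_le_coe_iff.2 (by linarith)
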